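/- If X and Y are centered (possibly degenerate) real Gaussian random variables, possibly dependent, with P(X = Y) < 1, then max{X, Y} is not a Gaussian random variable. -/

import Mathlib

open MeasureTheory ProbabilityTheory Real Filter
open scoped NNReal ENNReal

lemma gauss_pdf_dom (K m₁ m₂ : ℝ) (v₁ v₂ : ℝ≥0) (hv₂ : v₂ ≠ 0)
    (h : (v₁ : ℝ) < v₂ ∨ ((v₁ : ℝ) = v₂ ∧ m₁ < m₂)) :
    ∃ t₀ : ℝ, ∀ x ≥ t₀, K * gaussianPDFReal m₁ v₁ x ≤ gaussianPDFReal m₂ v₂ x := by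
  rcases le_or_gt K 0 with hK | hK
  · exact ⟨0, fun x _ => le_trans (mul_nonpos_of_nonpos_of_nonneg hK
      (gaussianPDFReal_nonneg _ _ _)) (gaussianPDFReal_nonneg _ _ _)⟩
  rcases eq_or_ne v₁ 0 with rfl | hv₁
  · exact ⟨0, fun x _ => by
      simp [gaussianPDFReal_zero_var, gaussianPDFReal_nonneg]⟩
  have hv₁' : (0:ℝ) < (v₁:ℝ) := by positivity
  have hv₂' : (0:ℝ) < (v₂:ℝ) := by positivity
  set c₁ : ℝ := (Real.sqrt (2 * π * v₁))⁻¹ with hc₁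
  set c₂ : ℝ := (Real.sqrt (2 * π * v₂))⁻¹ with hc₂
  have hc₁' : 0 < c₁ := by rw [hc₁]; positivity
  have hc₂' : 0 < c₂ := by rw [hc₂]; positivity
  set f : ℝ → ℝ := fun x => (x - m₁)^2 / (2 * v₁) - (x - m₂)^2 / (2 * v₂) with hf
  have htends : Tendsto f atTop atTop := by
    rcases h with hlt | ⟨heq, hm⟩
    · have hA : (0:ℝ) < 1 / (2 * v₁) - 1 / (2 * v₂) := by
        have : 1 / (2 * (v₂:ℝ)) < 1 / (2 * v₁) := by
          apply one_div_lt_one_div_of_lt <;> nlinarith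
        linarith
      have hfe : f = fun x => ((1 / (2 * (v₁:ℝ)) - 1 / (2 * v₂)) * x
          + (m₂ / v₂ - m₁ / v₁)) * x + (m₁^2 / (2 * v₁) - m₂^2 / (2 * v₂)) := by
        funext x
        rw [hf]
        field_simp
        ring
      rw [hfe]
      apply tendsto_atTop_add_const_right
      exact ((tendsto_id.const_mul_atTop hA).atTop_add tendsto_const_nhds).atTop_mul_atTop₀
        tendsto_id
    · have hB : (0:ℝ) < (m₂ - m₁) / v₂ := by
        apply div_pos <;> linarith
      have hfe : f = fun x => ((m₂ - m₁) / (v₂:ℝ)) * x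
          + (m₁^2 / (2 * v₂) - m₂^2 / (2 * v₂)) := by
        funext x
        rw [hf, heq]
        field_simp
        ring
      rw [hfe]
      apply tendsto_atTop_add_const_right
      exact tendsto_id.const_mul_atTop hB
  have hev : ∀ᶠ x in atTop, Real.log (K * c₁ / c₂) ≤ f x :=
    htends.eventually_ge_atTop _
  obtain ⟨t₀, ht₀⟩ := eventually_atTop.mp hev
  refine ⟨t₀, fun x hx => ?_⟩
  have hfx := ht₀ x hx
  have hpos : 0 < K * c₁ / c₂ := by positivity
  have h1 : K * c₁ / c₂ ≤ Real.exp (f x) := by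
    calc K * c₁ / c₂ = Real.exp (Real.log (K * c₁ / c₂)) := (Real.exp_log hpos).symm
    _ ≤ Real.exp (f x) := Real.exp_le_exp.mpr hfx
  have hE : Real.exp (f x) = Real.exp (-(x - m₂)^2 / (2 * v₂)) /
      Real.exp (-(x - m₁)^2 / (2 * v₁)) := by
    rw [← Real.exp_sub]
    congr 1
    rw [hf]
    ring
  rw [hE] at h1
  have h2 : K * c₁ * Real.exp (-(x - m₁)^2 / (2 * v₁)) ≤
      Real.exp (-(x - m₂)^2 / (2 * v₂)) * c₂ := by
    rw [div_le_div_iff₀ hc₂' (Real.exp_pos _)] at h1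
    linarith
  show K * (c₁ * Real.exp (-(x - m₁)^2 / (2 * v₁))) ≤
      c₂ * Real.exp (-(x - m₂)^2 / (2 * v₂))
  linarith

lemma gauss_tail_dom (K m₁ m₂ : ℝ) (v₁ v₂ : ℝ≥0) (hv₁ : v₁ ≠ 0) (hv₂ : v₂ ≠ 0) (hK : 0 ≤ K)
    (t : ℝ) (hpt : ∀ x ≥ t, K * gaussianPDFReal m₁ v₁ x ≤ gaussianPDFReal m₂ v₂ x) :
    ENNReal.ofReal K * gaussianReal m₁ v₁ (Set.Ici t) ≤ gaussianReal m₂ v₂ (Set.Ici t) := by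
  rw [gaussianReal_apply _ hv₁, gaussianReal_apply _ hv₂, ← lintegral_const_mul _
    (measurable_gaussianPDF _ _)]
  refine setLIntegral_mono (measurable_gaussianPDF _ _) (fun x hx => ?_)
  rw [gaussianPDF, gaussianPDF, ← ENNReal.ofReal_mul hK]
  exact ENNReal.ofReal_le_ofReal (hpt x hx)

lemma gauss_pos_of_volume_ne_zero (m : ℝ) {v : ℝ≥0} (hv : v ≠ 0) {s : Set ℝ}
    (hs : volume s ≠ 0) : 0 < gaussianReal m v s := by
  rw [pos_iff_ne_zero]
  intro h
  exact hs ((gaussianReal_absolutelyContinuous' m hv) h)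

lemma gauss_tail_pos (m : ℝ) {v : ℝ≥0} (hv : v ≠ 0) (t : ℝ) :
    0 < gaussianReal m v (Set.Ici t) :=
  gauss_pos_of_volume_ne_zero m hv (by simp [Real.volume_Ici])

lemma dirac_tail_zero (m t : ℝ) (hmt : m < t) : gaussianReal m 0 (Set.Ici t) = 0 := by
  rw [gaussianReal_zero_var, Measure.dirac_apply' _ measurableSet_Ici]
  simp [Set.indicator, hmt.not_ge]

lemma gauss_neg_symm (v : ℝ≥0) (s : ℝ) :
    gaussianReal 0 v (Set.Iic (-s)) = gaussianReal 0 v (Set.Ici s) := by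
  have hmap := gaussianReal_map_const_mul (μ := 0) (v := v) (-1)
  have h2 : (NNReal.mk ((-1:ℝ)^2) (sq_nonneg _) * v : ℝ≥0) = v := by
    rw [← NNReal.coe_inj, NNReal.coe_mul]
    norm_num
  rw [h2, mul_zero] at hmap
  have hmeas : Measurable (fun x : ℝ => (-1 : ℝ) * x) := measurable_id.const_mul _
  calc gaussianReal 0 v (Set.Iic (-s))
      = ((gaussianReal 0 v).map ((-1 : ℝ) * ·)) (Set.Iic (-s)) := by rw [hmap]
    _ = gaussianReal 0 v (((-1 : ℝ) * ·) ⁻¹' Set.Iic (-s)) := by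
        rw [Measure.map_apply hmeas measurableSet_Iic]
    _ = gaussianReal 0 v (Set.Ici s) := by
        congr 1
        ext x
        simp only [Set.mem_preimage, Set.mem_Iic, Set.mem_Ici]
        constructor <;> intro h <;> nlinarith

lemma ae_eq_of_le_of_map_eq {Ω : Type*} [MeasurableSpace Ω] (μ : Measure Ω)
    [IsProbabilityMeasure μ] (U V : Ω → ℝ) (hU : Measurable U) (hV : Measurable V)
    (hle : ∀ ω, V ω ≤ U ω) (hmap : μ.map U = μ.map V) : U =ᵐ[μ] V := by
  have key : ∀ q : ℚ, μ (U ⁻¹' Set.Ioi (q : ℝ) \ V ⁻¹' Set.Ioi (q : ℝ)) = 0 := by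
    intro q
    have h1 : μ (U ⁻¹' Set.Ioi (q : ℝ)) = μ (V ⁻¹' Set.Ioi (q : ℝ)) := by
      rw [← Measure.map_apply hU measurableSet_Ioi, ← Measure.map_apply hV measurableSet_Ioi,
        hmap]
    have hsub : V ⁻¹' Set.Ioi (q : ℝ) ⊆ U ⁻¹' Set.Ioi (q : ℝ) :=
      fun ω h => lt_of_lt_of_le h (hle ω)
    rw [measure_diff hsub (hV measurableSet_Ioi).nullMeasurableSet (measure_ne_top μ _), h1,
      tsub_self]
  have hsub : {ω | U ω ≠ V ω} ⊆ ⋃ q : ℚ, (U ⁻¹' Set.Ioi (q : ℝ) \ V ⁻¹' Set.Ioi (q : ℝ)) := by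
    intro ω hω
    have hlt : V ω < U ω := lt_of_le_of_ne (hle ω) (fun h => hω h.symm)
    obtain ⟨q, hq1, hq2⟩ := exists_rat_btwn hlt
    exact Set.mem_iUnion.mpr ⟨q, hq2, fun hmem => absurd hq1 (not_lt.mpr (le_of_lt hmem))⟩
  exact ae_iff.mpr (measure_mono_null hsub (measure_iUnion_null fun q => key q))

-- contradiction from tails in ENNReal: y ≤ x and 2x ≤ y with x pos finite
lemma tail_contra {x y : ℝ≥0∞} (hx : x ≠ ⊤) (hy : y ≠ ⊤) (hxpos : 0 < x)
    (h1 : y ≤ x) (h2 : ENNReal.ofReal 2 * x ≤ y) : False := by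
  have hx' : 0 < x.toReal := ENNReal.toReal_pos hxpos.ne' hx
  have h1' : y.toReal ≤ x.toReal := ENNReal.toReal_mono hx h1
  have h2' : 2 * x.toReal ≤ y.toReal := by
    have := ENNReal.toReal_mono hy h2
    rwa [ENNReal.toReal_mul, ENNReal.toReal_ofReal (by norm_num : (0:ℝ) ≤ 2)] at this
  linarith

lemma key {Ω : Type*} [MeasurableSpace Ω] (μ : Measure Ω) [IsProbabilityMeasure μ]
    (X Y : Ω → ℝ) (hX : Measurable X) (hY : Measurable Y) (a b : ℝ≥0) (hab : b ≤ a)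
    (hXg : μ.map X = gaussianReal 0 a) (hYg : μ.map Y = gaussianReal 0 b)
    (hne : μ {ω | X ω = Y ω} < 1) (m : ℝ) (v : ℝ≥0)
    (hZg : μ.map (fun ω => max (X ω) (Y ω)) = gaussianReal m v) : False := by
  have hZ : Measurable (fun ω => max (X ω) (Y ω)) := hX.max hY
  have hXt : ∀ t, μ (X ⁻¹' Set.Ici t) = gaussianReal 0 a (Set.Ici t) := fun t => by
    rw [← hXg, Measure.map_apply hX measurableSet_Ici]
  have hYt : ∀ t, μ (Y ⁻¹' Set.Ici t) = gaussianReal 0 b (Set.Ici t) := fun t => by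
    rw [← hYg, Measure.map_apply hY measurableSet_Ici]
  have hZt : ∀ t, μ ((fun ω => max (X ω) (Y ω)) ⁻¹' Set.Ici t) = gaussianReal m v (Set.Ici t) :=
    fun t => by rw [← hZg, Measure.map_apply hZ measurableSet_Ici]
  -- a ≠ 0
  rcases eq_or_ne a 0 with rfl | ha
  · have hb0 : b = 0 := le_antisymm hab zero_le
    subst hb0
    have hX1 : μ (X ⁻¹' {(0:ℝ)}) = 1 := by
      rw [← Measure.map_apply hX (measurableSet_singleton 0), hXg, gaussianReal_zero_var]
      simp
    have hY1 : μ (Y ⁻¹' {(0:ℝ)}) = 1 := by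
      rw [← Measure.map_apply hY (measurableSet_singleton 0), hYg, gaussianReal_zero_var]
      simp
    have hYc : μ ((Y ⁻¹' {(0:ℝ)})ᶜ) = 0 := by
      rw [measure_compl (hY (measurableSet_singleton 0)) (measure_ne_top _ _), hY1]
      simp
    have hinter : μ (X ⁻¹' {(0:ℝ)} ∩ Y ⁻¹' {(0:ℝ)}) = 1 := by
      rw [measure_inter_conull hYc, hX1]
    have hsub : (X ⁻¹' {(0:ℝ)} ∩ Y ⁻¹' {(0:ℝ)}) ⊆ {ω | X ω = Y ω} := by
      rintro ω ⟨h1, h2⟩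
      simp only [Set.mem_preimage, Set.mem_singleton_iff] at h1 h2
      simp [Set.mem_setOf_eq, h1, h2]
    exact absurd (hinter ▸ measure_mono hsub) hne.not_ge
  -- the "sum of tails" contradiction, used when v is big
  have sum_contra : v ≠ 0 → ((a:ℝ) < v ∨ ((a:ℝ) = v ∧ 0 < m)) → False := by
    intro hv hconda
    have hcondb : (b:ℝ) < v ∨ ((b:ℝ) = v ∧ 0 < m) := by
      rcases hconda with h | ⟨h, hm⟩
      · exact Or.inl (lt_of_le_of_lt (by exact_mod_cast hab) h)
      · rcases lt_or_eq_of_le (show (b:ℝ) ≤ a from by exact_mod_cast hab) with h2 | h2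
        · exact Or.inl (h ▸ h2)
        · exact Or.inr ⟨h2.trans h, hm⟩
    obtain ⟨t₁, h₁⟩ := gauss_pdf_dom 4 0 m a v hv hconda
    -- bound for b's tail at some point ≥ given
    have hbB : ∃ t₂, ∀ t ≥ t₂, ENNReal.ofReal 4 * gaussianReal 0 b (Set.Ici t)
        ≤ gaussianReal m v (Set.Ici t) := by
      rcases eq_or_ne b 0 with rfl | hb
      · exact ⟨1, fun t ht => by
          rw [dirac_tail_zero 0 t (by linarith)]
          simp⟩
      · obtain ⟨t₂, h₂⟩ := gauss_pdf_dom 4 0 m b v hv hcondb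
        exact ⟨t₂, fun t ht => gauss_tail_dom 4 0 m b v hb hv (by norm_num) t
          (fun x hx => h₂ x (le_trans ht hx))⟩
    obtain ⟨t₂, h₂⟩ := hbB
    set t := max t₁ t₂ with hts
    have hA : ENNReal.ofReal 4 * gaussianReal 0 a (Set.Ici t) ≤ gaussianReal m v (Set.Ici t) :=
      gauss_tail_dom 4 0 m a v ha hv (by norm_num) t
        (fun x hx => h₁ x (le_trans (le_max_left _ _) hx))
    have hB := h₂ t (le_max_right _ _)
    have hU : gaussianReal m v (Set.Ici t) ≤
        gaussianReal 0 a (Set.Ici t) + gaussianReal 0 b (Set.Ici t) := by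
      rw [← hXt, ← hYt, ← hZt]
      refine le_trans (measure_mono ?_) (measure_union_le _ _)
      intro ω hω
      simp only [Set.mem_preimage, Set.mem_Ici, Set.mem_union] at hω ⊢
      exact (le_max_iff.mp hω)
    -- to reals
    have hVne : gaussianReal m v (Set.Ici t) ≠ ⊤ := measure_ne_top _ _
    have hVpos : 0 < (gaussianReal m v (Set.Ici t)).toReal :=
      ENNReal.toReal_pos (gauss_tail_pos m hv t).ne' hVne
    have hA' : 4 * (gaussianReal 0 a (Set.Ici t)).toReal ≤
        (gaussianReal m v (Set.Ici t)).toReal := by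
      have := ENNReal.toReal_mono hVne hA
      rwa [ENNReal.toReal_mul, ENNReal.toReal_ofReal (by norm_num : (0:ℝ) ≤ 4)] at this
    have hB' : 4 * (gaussianReal 0 b (Set.Ici t)).toReal ≤
        (gaussianReal m v (Set.Ici t)).toReal := by
      have := ENNReal.toReal_mono hVne hB
      rwa [ENNReal.toReal_mul, ENNReal.toReal_ofReal (by norm_num : (0:ℝ) ≤ 4)] at this
    have hU' : (gaussianReal m v (Set.Ici t)).toReal ≤
        (gaussianReal 0 a (Set.Ici t)).toReal + (gaussianReal 0 b (Set.Ici t)).toReal := by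
      have := ENNReal.toReal_mono (by finiteness) hU
      rwa [ENNReal.toReal_add (measure_ne_top _ _) (measure_ne_top _ _)] at this
    linarith
  rcases lt_trichotomy (v:ℝ) (a:ℝ) with hva | hva | hva
  · -- v < a : right tail of Z too small
    have hta : ∀ t, gaussianReal 0 a (Set.Ici t) ≤ gaussianReal m v (Set.Ici t) := fun t => by
      rw [← hXt, ← hZt]
      refine measure_mono (fun ω hω => ?_)
      simp only [Set.mem_preimage, Set.mem_Ici] at hω ⊢
      exact le_trans hω (le_max_left _ _)
    rcases eq_or_ne v 0 with rfl | hv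
    · have h0 := dirac_tail_zero m (m+1) (by linarith)
      have := hta (m+1)
      rw [h0] at this
      exact absurd (le_antisymm this zero_le) (gauss_tail_pos 0 ha (m+1)).ne'
    · obtain ⟨t₀, hdom⟩ := gauss_pdf_dom 2 m 0 v a ha (Or.inl hva)
      have hT := gauss_tail_dom 2 m 0 v a hv ha (by norm_num) t₀ hdom
      exact tail_contra (measure_ne_top _ _) (measure_ne_top _ _)
        (gauss_tail_pos m hv t₀) (hta t₀) hT
  · -- v = a
    have hva' : v = a := by exact_mod_cast hva
    subst hva'
    rcases lt_trichotomy m 0 with hm | hm | hm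
    · -- m < 0 : left tail comparison at 0
      have hXl : μ (X ⁻¹' Set.Iic (0:ℝ)) = gaussianReal 0 v (Set.Iic 0) := by
        rw [← hXg, Measure.map_apply hX measurableSet_Iic]
      have hZl : μ ((fun ω => max (X ω) (Y ω)) ⁻¹' Set.Iic (0:ℝ))
          = gaussianReal m v (Set.Iic 0) := by
        rw [← hZg, Measure.map_apply hZ measurableSet_Iic]
      have hle : gaussianReal m v (Set.Iic 0) ≤ gaussianReal 0 v (Set.Iic 0) := by
        rw [← hXl, ← hZl]
        refine measure_mono (fun ω hω => ?_)
        simp only [Set.mem_preimage, Set.mem_Iic] at hω ⊢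
        exact le_trans (le_max_left _ _) hω
      have hmap := gaussianReal_map_add_const (μ := 0) (v := v) m
      rw [zero_add] at hmap
      have hshift : gaussianReal m v (Set.Iic 0) = gaussianReal 0 v (Set.Iic (-m)) := by
        rw [← hmap, Measure.map_apply (measurable_add_const m) measurableSet_Iic]
        congr 1
        ext x
        simp only [Set.mem_preimage, Set.mem_Iic]
        constructor <;> intro h <;> linarith
      have hunion : Set.Iic (-m) = Set.Iic (0:ℝ) ∪ Set.Ioc (0:ℝ) (-m) :=
        (Set.Iic_union_Ioc_eq_Iic (by linarith)).symm
      have hdisj : Disjoint (Set.Iic (0:ℝ)) (Set.Ioc (0:ℝ) (-m)) := by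
        simp [Set.disjoint_left]
        intro x hx h0
        linarith
      have hsum : gaussianReal 0 v (Set.Iic (-m)) =
          gaussianReal 0 v (Set.Iic 0) + gaussianReal 0 v (Set.Ioc 0 (-m)) := by
        rw [hunion, measure_union hdisj measurableSet_Ioc]
      have hpos : 0 < gaussianReal 0 v (Set.Ioc 0 (-m)) := by
        refine gauss_pos_of_volume_ne_zero 0 ha ?_
        rw [Real.volume_Ioc]
        simp only [ne_eq, ENNReal.ofReal_eq_zero, not_le]
        linarith
      have : gaussianReal 0 v (Set.Iic 0) < gaussianReal m v (Set.Iic 0) := by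
        rw [hshift, hsum]
        exact ENNReal.lt_add_right (measure_ne_top _ _) hpos.ne'
      exact absurd hle this.not_ge
    · -- m = 0 : Z has the same law as X
      subst hm
      have hZX : (fun ω => max (X ω) (Y ω)) =ᵐ[μ] X := by
        refine ae_eq_of_le_of_map_eq μ _ X hZ hX (fun ω => le_max_left _ _) ?_
        rw [hZg, hXg]
      rcases eq_or_lt_of_le hab with hba | hba
      · -- b = a : then Z =ᵐ Y too, so X =ᵐ Y
        have hZY : (fun ω => max (X ω) (Y ω)) =ᵐ[μ] Y := by
          refine ae_eq_of_le_of_map_eq μ _ Y hZ hY (fun ω => le_max_right _ _) ?_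
          rw [hZg, hYg, hba]
        have hXY : X =ᵐ[μ] Y := hZX.symm.trans hZY
        have h0 : μ {ω | X ω = Y ω}ᶜ = 0 := by
          have h := ae_iff.mp hXY
          simpa [Set.compl_setOf] using h
        have h1 : μ {ω | X ω = Y ω} = 1 :=
          (prob_compl_eq_zero_iff (measurableSet_eq_fun hX hY)).mp h0
        exact absurd h1 hne.ne
      · -- b < a : then Y ≤ X a.e., left tails contradict
        have hYle : ∀ s : ℝ, μ (X ⁻¹' Set.Iic (-s)) ≤ μ (Y ⁻¹' Set.Iic (-s)) := by
          intro s
          refine measure_mono_ae (hZX.mono (fun ω hω hmem => ?_))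
          change X ω ≤ -s at hmem
          show Y ω ≤ -s
          calc Y ω ≤ max (X ω) (Y ω) := le_max_right _ _
            _ = X ω := hω
            _ ≤ -s := hmem
        have htail : ∀ s : ℝ, gaussianReal 0 v (Set.Ici s) ≤ gaussianReal 0 b (Set.Ici s) := by
          intro s
          have h1 : μ (X ⁻¹' Set.Iic (-s)) = gaussianReal 0 v (Set.Iic (-s)) := by
            rw [← hXg, Measure.map_apply hX measurableSet_Iic]
          have h2 : μ (Y ⁻¹' Set.Iic (-s)) = gaussianReal 0 b (Set.Iic (-s)) := by
            rw [← hYg, Measure.map_apply hY measurableSet_Iic]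
          rw [← gauss_neg_symm, ← gauss_neg_symm, ← h1, ← h2]
          exact hYle s
        rcases eq_or_ne b 0 with rfl | hb
        · have h0 : gaussianReal 0 (0:ℝ≥0) (Set.Ici (1:ℝ)) = 0 :=
            dirac_tail_zero 0 1 (by norm_num)
          have := htail 1
          rw [h0] at this
          exact absurd (le_antisymm this zero_le) (gauss_tail_pos 0 ha 1).ne'
        · obtain ⟨t₀, hdom⟩ := gauss_pdf_dom 2 0 0 b v ha
            (Or.inl (by exact_mod_cast hba))
          have hT := gauss_tail_dom 2 0 0 b v hb ha (by norm_num) t₀ hdom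
          exact tail_contra (measure_ne_top _ _) (measure_ne_top _ _)
            (gauss_tail_pos 0 hb t₀) (htail t₀) hT
    · -- m > 0
      exact sum_contra ha (Or.inr ⟨rfl, hm⟩)
  · -- v > a
    have hv : v ≠ 0 := by
      intro h
      rw [h] at hva
      simp only [NNReal.coe_zero] at hva
      exact absurd hva (NNReal.coe_nonneg a).not_gt
    exact sum_contra hv (Or.inl hva)

/-- The maximum of two centered (possibly degenerate, possibly dependent) Gaussians
that are not a.s. equal is not Gaussian. -/
theorem stmt7 {Ω : Type*} [MeasurableSpace Ω] (μ : Measure Ω) [IsProbabilityMeasure μ]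
    (X Y : Ω → ℝ) (hX : Measurable X) (hY : Measurable Y) (a b : ℝ≥0)
    (hXg : μ.map X = gaussianReal 0 a) (hYg : μ.map Y = gaussianReal 0 b)
    (hne : μ {ω | X ω = Y ω} < 1) :
    ¬ ∃ (m : ℝ) (v : ℝ≥0),
      μ.map (fun ω => max (X ω) (Y ω)) = gaussianReal m v := by
  rintro ⟨m, v, hZg⟩
  rcases le_total b a with hab | hab
  · exact key μ X Y hX hY a b hab hXg hYg hne m v hZg
  · have hset : {ω | Y ω = X ω} = {ω | X ω = Y ω} := by
      ext ω
      exact ⟨Eq.symm, Eq.symm⟩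
    have hne' : μ {ω | Y ω = X ω} < 1 := by rw [hset]; exact hne
    have hfun : (fun ω => max (Y ω) (X ω)) = fun ω => max (X ω) (Y ω) :=
      funext fun ω => max_comm _ _
    have hZg' : μ.map (fun ω => max (Y ω) (X ω)) = gaussianReal m v := by
      rw [hfun]; exact hZg
    exact key μ Y X hY hX b a hab hYg hXg hne' m v hZg'
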